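/- Let G be a graph with pebble distribution p and target vertex r, and define q by q(v) = p(v) + 1 for all v ≠ r and q(r) = p(r). Then r is reachable in G under p if and only if from q there is a sequence of pebbling moves after which every vertex of G has at least one pebble. -/

import Mathlib

variable {V : Type*} [DecidableEq V]

/-- Result of a pebbling move `u → v`: remove two pebbles from `u`, add one to `v`. -/
def applyMove (p : V → ℕ) (u v : V) (x : V) : ℕ :=
  (if x = u then p x - 2 else p x) + (if x = v then 1 else 0)

/-- A list of moves is a valid sequence of pebbling moves from `p` in `G`. -/
def IsValidSeq (G : SimpleGraph V) : (V → ℕ) → List (V × V) → Prop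
  | _, [] => True
  | p, m :: rest => G.Adj m.1 m.2 ∧ 2 ≤ p m.1 ∧ IsValidSeq G (applyMove p m.1 m.2) rest

/-- The distribution after executing a sequence of pebbling moves. -/
def applySeq (p : V → ℕ) : List (V × V) → V → ℕ
  | [] => p
  | m :: rest => applySeq (applyMove p m.1 m.2) rest

/-- Indegree of a vertex in a directed multigraph (multiset of directed edges). -/
def indeg (D : Multiset (V × V)) (v : V) : ℕ :=
  Multiset.card (D.filter fun e => e.2 = v)

/-- Outdegree of a vertex in a directed multigraph. -/
def outdeg (D : Multiset (V × V)) (v : V) : ℕ :=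
  Multiset.card (D.filter fun e => e.1 = v)

/-- balance(D,p,v) = p(v) + indeg_D(v) - 2·outdeg_D(v). -/
def balance (D : Multiset (V × V)) (p : V → ℕ) (v : V) : ℤ :=
  (p v : ℤ) + (indeg D v : ℤ) - 2 * (outdeg D v : ℤ)

/-- `D` is orderable under `p`: some ordering of the edge multiset of `D`
is a valid sequence of pebbling moves. -/
def Orderable (G : SimpleGraph V) (D : Multiset (V × V)) (p : V → ℕ) : Prop :=
  ∃ σ : List (V × V), (σ : Multiset (V × V)) = D ∧ IsValidSeq G p σ

/-- A directed multigraph is acyclic if its edge relation admits no directed cycle. -/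
def DAcyclic (D : Multiset (V × V)) : Prop :=
  ∀ v : V, ¬ Relation.TransGen (fun a b => (a, b) ∈ D) v v

/-- The strongly connected component of `a` in the directed multigraph `D`. -/
def SCC (D : Multiset (V × V)) (a : V) : Set V :=
  {b | Relation.ReflTransGen (fun x y => (x, y) ∈ D) a b ∧
       Relation.ReflTransGen (fun x y => (x, y) ∈ D) b a}

set_option linter.unusedSectionVars false

-- ## basic lemmas

lemma applyMove_add (p c : V → ℕ) (u v : V) (h : 2 ≤ p u) :
    applyMove (fun x => p x + c x) u v = fun x => applyMove p u v x + c x := by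
  funext x
  unfold applyMove
  dsimp only
  split_ifs with h1 h2 h2 <;> subst_vars <;> omega

lemma valid_add (G : SimpleGraph V) (c : V → ℕ) :
    ∀ (σ : List (V × V)) (p : V → ℕ), IsValidSeq G p σ →
      IsValidSeq G (fun x => p x + c x) σ ∧
      ∀ x, applySeq (fun x => p x + c x) σ x = applySeq p σ x + c x := by
  intro σ
  induction σ with
  | nil => intro p _; exact ⟨trivial, fun x => rfl⟩
  | cons m rest ih =>
    rintro p ⟨hadj, h2, hrest⟩
    have hm : applyMove (fun x => p x + c x) m.1 m.2 = fun x => applyMove p m.1 m.2 x + c x :=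
      applyMove_add p c m.1 m.2 h2
    obtain ⟨hv, ha⟩ := ih _ hrest
    refine ⟨⟨hadj, le_trans h2 (Nat.le_add_right _ _), ?_⟩, ?_⟩
    · rw [show IsValidSeq G (applyMove (fun x => p x + c x) m.1 m.2) rest =
        IsValidSeq G (fun x => applyMove p m.1 m.2 x + c x) rest from by rw [hm]]
      exact hv
    · intro x
      show applySeq (applyMove (fun x => p x + c x) m.1 m.2) rest x
        = applySeq (applyMove p m.1 m.2) rest x + c x
      rw [hm]
      exact ha x

lemma applyMove_cast (p : V → ℕ) (u v x : V) (h : 2 ≤ p u) :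
    (applyMove p u v x : ℤ)
      = (p x : ℤ) + (if x = v then 1 else 0) - 2 * (if x = u then 1 else 0) := by
  unfold applyMove
  split_ifs with h1 h2 h2 <;> subst_vars <;> push_cast <;> omega

lemma indeg_cons (e : V × V) (D : Multiset (V × V)) (w : V) :
    indeg (e ::ₘ D) w = (if e.2 = w then 1 else 0) + indeg D w := by
  unfold indeg; rw [Multiset.filter_cons]
  split_ifs <;> simp [Nat.add_comm]

lemma outdeg_cons (e : V × V) (D : Multiset (V × V)) (w : V) :
    outdeg (e ::ₘ D) w = (if e.1 = w then 1 else 0) + outdeg D w := by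
  unfold outdeg; rw [Multiset.filter_cons]
  split_ifs <;> simp [Nat.add_comm]

lemma indeg_zero (w : V) : indeg (0 : Multiset (V × V)) w = 0 := rfl
lemma outdeg_zero (w : V) : outdeg (0 : Multiset (V × V)) w = 0 := rfl

lemma balance_cons (D : Multiset (V × V)) (p : V → ℕ) (m : V × V) (w : V) (h : 2 ≤ p m.1) :
    balance (m ::ₘ D) p w = balance D (applyMove p m.1 m.2) w := by
  unfold balance
  rw [indeg_cons, outdeg_cons, applyMove_cast p m.1 m.2 w h]
  have h1 : (if m.2 = w then (1:ℤ) else 0) = (if w = m.2 then 1 else 0) := by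
    rcases eq_or_ne m.2 w with rfl | h'
    · simp
    · simp [h', Ne.symm h']
  have h2 : (if m.1 = w then (1:ℤ) else 0) = (if w = m.1 then 1 else 0) := by
    rcases eq_or_ne m.1 w with rfl | h'
    · simp
    · simp [h', Ne.symm h']
  push_cast
  rw [h1, h2]
  ring

lemma applySeq_eq_balance (G : SimpleGraph V) :
    ∀ (σ : List (V × V)) (p : V → ℕ), IsValidSeq G p σ →
      ∀ w, (applySeq p σ w : ℤ) = balance (↑σ) p w := by
  intro σ
  induction σ with
  | nil => intro p _ w; simp [applySeq, balance, indeg, outdeg]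
  | cons m rest ih =>
    rintro p ⟨hadj, h2, hrest⟩ w
    have hrec := ih _ hrest w
    rw [show ((↑(m :: rest) : Multiset (V × V))) = m ::ₘ ↑rest from (Multiset.cons_coe m rest).symm]
    rw [show applySeq p (m :: rest) w = applySeq (applyMove p m.1 m.2) rest w from rfl]
    rw [hrec, balance_cons _ _ _ _ h2]

lemma edges_adj (G : SimpleGraph V) :
    ∀ (σ : List (V × V)) (p : V → ℕ), IsValidSeq G p σ → ∀ e ∈ σ, G.Adj e.1 e.2 := by
  intro σ
  induction σ with
  | nil => intro p _ e he; simp at he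
  | cons m rest ih =>
    rintro p ⟨hadj, h2, hrest⟩ e he
    rcases List.mem_cons.1 he with rfl | he
    · exact hadj
    · exact ih _ hrest e he

-- ## walks

lemma walk_deg :
    ∀ (L : List (V × V)) (e : V × V), List.Chain' (fun a b => a.2 = b.1) (e :: L) →
      ∀ w, (outdeg (↑(e :: L) : Multiset (V × V)) w : ℤ) - indeg (↑(e :: L)) w =
        (if e.1 = w then 1 else 0) - (if ((e :: L).getLast (by simp)).2 = w then 1 else 0) := by
  intro L
  induction L with
  | nil =>
    intro e _ w
    show (outdeg (↑[e] : Multiset (V × V)) w : ℤ) - _ = _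
    rw [show ((↑[e] : Multiset (V × V))) = e ::ₘ 0 from rfl]
    rw [indeg_cons, outdeg_cons, indeg_zero, outdeg_zero]
    simp
    by_cases h : e.2 = w <;> simp [h]
  | cons f L ih =>
    intro e hc w
    have hef : e.2 = f.1 := (List.isChain_cons_cons.1 hc).1
    have hcf : List.Chain' (fun a b => a.2 = b.1) (f :: L) := (List.isChain_cons_cons.1 hc).2
    have h1 := ih f hcf w
    rw [show ((↑(e :: f :: L) : Multiset (V × V))) = e ::ₘ ↑(f :: L) from
      (Multiset.cons_coe _ _).symm]
    rw [indeg_cons, outdeg_cons]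
    rw [show ((e :: f :: L).getLast (by simp)) = ((f :: L).getLast (by simp)) from
      List.getLast_cons (by simp)]
    rw [hef]
    push_cast
    push_cast at h1
    linarith [h1]

lemma exists_split_of_not_nodup {α : Type*} :
    ∀ (l : List α), ¬ l.Nodup → ∃ a l1 l2 l3, l = l1 ++ a :: l2 ++ a :: l3 := by
  intro l
  induction l with
  | nil => intro h; exact absurd List.nodup_nil h
  | cons x xs ih =>
    intro h
    by_cases hx : x ∈ xs
    · obtain ⟨s, t, rfl⟩ := List.append_of_mem hx
      exact ⟨x, [], s, t, rfl⟩
    · have hxs : ¬ xs.Nodup := fun hn => h (List.nodup_cons.2 ⟨hx, hn⟩)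
      obtain ⟨a, l1, l2, l3, rfl⟩ := ih hxs
      exact ⟨a, x :: l1, l2, l3, rfl⟩

lemma exists_balanced (D : Multiset (V × V)) :
    ∀ (n : ℕ) (e : V × V) (L : List (V × V)), (e :: L).length ≤ n →
      List.Chain' (fun a b => a.2 = b.1) (e :: L) →
      ((e :: L).getLast (by simp)).2 = e.1 →
      (∀ f ∈ e :: L, f ∈ D) →
      ∃ C : Multiset (V × V), C ≤ D ∧ C ≠ 0 ∧ ∀ w, indeg C w = outdeg C w := by
  intro n
  induction n with
  | zero => intro e L hlen; simp at hlen
  | succ n ih =>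
    intro e L hlen hc hclosed hmem
    by_cases hnd : (e :: L).Nodup
    · refine ⟨↑(e :: L), ?_, by simp, ?_⟩
      · rw [Multiset.le_iff_count]
        intro a
        by_cases ha : a ∈ e :: L
        · rw [Multiset.count_eq_one_of_mem (a := a) (s := ((e :: L : List (V × V)) : Multiset (V × V))) (Multiset.coe_nodup.2 hnd) (Multiset.mem_coe.2 ha)]
          exact Multiset.one_le_count_iff_mem.2 (hmem a ha)
        · rw [Multiset.count_eq_zero.2 (by simpa using ha)]
          exact Nat.zero_le _
      · intro w
        have hbal := walk_deg L e hc w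
        rw [hclosed] at hbal
        omega
    · obtain ⟨a, l1, l2, l3, hsplit⟩ := exists_split_of_not_nodup _ hnd
      rw [hsplit] at hc
      obtain ⟨hcL, -, hjunc⟩ := List.isChain_append.1 hc
      have hc4 : List.Chain' (fun x y => x.2 = y.1) (a :: l2) :=
        (List.isChain_append.1 hcL).2.1
      have hlast : ((a :: l2).getLast (by simp)).2 = a.1 := by
        refine hjunc _ ?_ a rfl
        rw [List.getLast?_append_of_ne_nil (l₁ := l1) (by simp),
          List.getLast?_eq_getLast (by simp)]
        rfl
      have hlen' : (a :: l2).length ≤ n := by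
        have : (e :: L).length = l1.length + l2.length + l3.length + 2 := by
          rw [hsplit]; simp; omega
        simp only [List.length_cons] at *
        omega
      refine ih a l2 hlen' hc4 hlast ?_
      intro f hf
      apply hmem
      rw [hsplit]
      rcases List.mem_cons.1 hf with rfl | hf <;> simp [hf]

lemma transgen_walk (D : Multiset (V × V)) {x y : V}
    (h : Relation.TransGen (fun a b => (a, b) ∈ D) x y) :
    ∃ (e : V × V) (L : List (V × V)),
      List.Chain' (fun a b => a.2 = b.1) (e :: L) ∧ (∀ f ∈ e :: L, f ∈ D) ∧
      e.1 = x ∧ ((e :: L).getLast (by simp)).2 = y := by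
  induction h with
  | single hxy => exact ⟨(x, _), [], by simp [List.Chain'], by simpa using hxy, rfl, rfl⟩
  | tail hab hbc ih =>
    rename_i b c
    obtain ⟨e, L, hc, hm, he1, hlast⟩ := ih
    refine ⟨e, L ++ [(b, c)], ?_, ?_, he1, ?_⟩
    · rw [show e :: (L ++ [(b, c)]) = (e :: L) ++ [(b, c)] from rfl]
      unfold List.Chain'; rw [List.isChain_append]
      refine ⟨hc, by simp, ?_⟩
      intro u hu v hv
      rw [List.getLast?_eq_getLast (by simp)] at hu
      simp at hu hv
      subst hu; subst hv
      exact hlast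
    · intro f hf
      rcases List.mem_cons.1 hf with rfl | hf
      · exact hm f (by simp)
      · rcases List.mem_append.1 hf with hf | hf
        · exact hm f (by simp [hf])
        · simp at hf; subst hf; exact hbc
    · exact congrArg Prod.snd (List.getLast_concat (l := e :: L))

-- ## cycle removal

lemma dacyclic_zero : DAcyclic (0 : Multiset (V × V)) := by
  intro v h
  cases h with
  | single h => simp at h
  | tail _ h => simp at h

lemma dacyclic_of_le {C D : Multiset (V × V)} (h : C ≤ D) (hD : DAcyclic D) : DAcyclic C := by
  intro v hv
  exact hD v (Relation.TransGen.mono (fun a b hab => Multiset.mem_of_le h hab) v v hv)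

lemma exists_acyclic_sub :
    ∀ (n : ℕ) (D : Multiset (V × V)), Multiset.card D ≤ n →
      ∃ D' : Multiset (V × V), D' ≤ D ∧ DAcyclic D' ∧
        ∀ w : V, (indeg D w : ℤ) - 2 * outdeg D w ≤ (indeg D' w : ℤ) - 2 * outdeg D' w := by
  intro n
  induction n with
  | zero =>
    intro D hD
    have hD0 : D = 0 := Multiset.card_eq_zero.1 (Nat.le_zero.1 hD)
    subst hD0
    exact ⟨0, le_rfl, dacyclic_zero, fun w => le_rfl⟩
  | succ n ih =>
    intro D hD
    by_cases hac : DAcyclic D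
    · exact ⟨D, le_rfl, hac, fun w => le_rfl⟩
    · obtain ⟨v, hv⟩ : ∃ v, Relation.TransGen (fun a b => (a, b) ∈ D) v v := by
        unfold DAcyclic at hac
        push_neg at hac
        exact hac
      obtain ⟨e, L, hc, hm, he1, hlast⟩ := transgen_walk D hv
      have hclosed : ((e :: L).getLast (by simp)).2 = e.1 := by rw [hlast, he1]
      obtain ⟨C, hCD, hC0, hCbal⟩ := exists_balanced D (e :: L).length e L le_rfl hc hclosed hm
      have hcard : Multiset.card (D - C) ≤ n := by
        have h1 := Multiset.card_sub hCD
        have h2 : 0 < Multiset.card C := Multiset.card_pos.2 hC0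
        have h3 := Multiset.card_le_card hCD
        omega
      obtain ⟨D', hsub, hacy, hbal⟩ := ih (D - C) hcard
      refine ⟨D', hsub.trans (tsub_le_self), hacy, fun w => le_trans ?_ (hbal w)⟩
      have hi : indeg (D - C) w = indeg D w - indeg C w := by
        unfold indeg
        rw [Multiset.filter_sub, Multiset.card_sub (Multiset.filter_le_filter _ hCD)]
      have ho : outdeg (D - C) w = outdeg D w - outdeg C w := by
        unfold outdeg
        rw [Multiset.filter_sub, Multiset.card_sub (Multiset.filter_le_filter _ hCD)]
      have hile : indeg C w ≤ indeg D w := Multiset.card_le_card (Multiset.filter_le_filter _ hCD)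
      have hole : outdeg C w ≤ outdeg D w := Multiset.card_le_card (Multiset.filter_le_filter _ hCD)
      have hb := hCbal w
      rw [hi, ho]
      omega

-- ## source existence

lemma exists_source_aux (D : Multiset (V × V)) (hac : DAcyclic D) :
    ∀ (n : ℕ) (s : Finset V) (a : V), s.card ≤ n → 0 < outdeg D a →
      (∀ b, Relation.TransGen (fun x y => (x, y) ∈ D) b a → b ∈ s) →
      ∃ u, 0 < outdeg D u ∧ indeg D u = 0 := by
  intro n
  induction n with
  | zero =>
    intro s a hs ha hpred
    by_cases h : indeg D a = 0
    · exact ⟨a, ha, h⟩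
    · exfalso
      obtain ⟨e, he⟩ := Multiset.card_pos_iff_exists_mem.1 (Nat.pos_of_ne_zero h)
      have heD : e ∈ D := (Multiset.mem_filter.1 he).1
      have he2 : e.2 = a := (Multiset.mem_filter.1 he).2
      have hta : Relation.TransGen (fun x y => (x, y) ∈ D) e.1 a :=
        Relation.TransGen.single (by rw [← he2]; exact heD)
      have : e.1 ∈ s := hpred e.1 hta
      have : s = ∅ := Finset.card_eq_zero.1 (Nat.le_zero.1 hs)
      simp_all
  | succ n ih =>
    intro s a hs ha hpred
    by_cases h : indeg D a = 0
    · exact ⟨a, ha, h⟩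
    · obtain ⟨e, he⟩ := Multiset.card_pos_iff_exists_mem.1 (Nat.pos_of_ne_zero h)
      have heD : e ∈ D := (Multiset.mem_filter.1 he).1
      have he2 : e.2 = a := (Multiset.mem_filter.1 he).2
      have hta : Relation.TransGen (fun x y => (x, y) ∈ D) e.1 a :=
        Relation.TransGen.single (by rw [← he2]; exact heD)
      have hts : e.1 ∈ s := hpred e.1 hta
      have htout : 0 < outdeg D e.1 := by
        apply Multiset.card_pos_iff_exists_mem.2
        exact ⟨e, Multiset.mem_filter.2 ⟨heD, rfl⟩⟩
      refine ih (s.erase e.1) e.1 ?_ htout ?_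
      · have := Finset.card_erase_of_mem hts
        omega
      · intro b hb
        apply Finset.mem_erase.2
        constructor
        · rintro rfl
          exact hac e.1 hb
        · exact hpred b (hb.trans hta)

lemma exists_source (D : Multiset (V × V)) (hac : DAcyclic D) (hne : D ≠ 0) :
    ∃ u, 0 < outdeg D u ∧ indeg D u = 0 := by
  obtain ⟨e, he⟩ := Multiset.exists_mem_of_ne_zero hne
  have hout : 0 < outdeg D e.1 :=
    Multiset.card_pos_iff_exists_mem.2 ⟨e, Multiset.mem_filter.2 ⟨he, rfl⟩⟩
  refine exists_source_aux D hac ((D.map Prod.fst).toFinset).card (D.map Prod.fst).toFinset e.1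
    le_rfl hout ?_
  intro b hb
  rw [Multiset.mem_toFinset]
  obtain ⟨c, hc⟩ : ∃ c, (b, c) ∈ D := by
    obtain ⟨c, h, -⟩ := Relation.TransGen.head'_iff.1 hb
    exact ⟨c, h⟩
  exact Multiset.mem_map.2 ⟨(b, c), hc, rfl⟩

-- ## orderability

lemma balance_zero (p : V → ℕ) (w : V) : balance (0 : Multiset (V × V)) p w = p w := by
  unfold balance
  rw [indeg_zero, outdeg_zero]
  push_cast
  ring

lemma orderable_of_acyclic (G : SimpleGraph V) :
    ∀ (n : ℕ) (D : Multiset (V × V)) (p : V → ℕ), Multiset.card D ≤ n →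
      DAcyclic D → (∀ e ∈ D, G.Adj e.1 e.2) → (∀ v, 0 ≤ balance D p v) →
      ∃ σ : List (V × V), (↑σ : Multiset (V × V)) = D ∧ IsValidSeq G p σ ∧
        ∀ v, (applySeq p σ v : ℤ) = balance D p v := by
  intro n
  induction n with
  | zero =>
    intro D p hcard _ _ _
    have hD : D = 0 := Multiset.card_eq_zero.1 (Nat.le_zero.1 hcard)
    subst hD
    exact ⟨[], rfl, trivial, fun v => by rw [balance_zero]; rfl⟩
  | succ n ih =>
    intro D p hcard hac hadj hbal
    by_cases hD : D = 0
    · subst hD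
      exact ⟨[], rfl, trivial, fun v => by rw [balance_zero]; rfl⟩
    · obtain ⟨u, hout, hin⟩ := exists_source D hac hD
      obtain ⟨e, he⟩ := Multiset.card_pos_iff_exists_mem.1 hout
      have heD : e ∈ D := (Multiset.mem_filter.1 he).1
      have he1 : e.1 = u := (Multiset.mem_filter.1 he).2
      obtain ⟨u', v⟩ := e
      dsimp at he1
      subst he1
      have h2 : 2 ≤ p u' := by
        have hb := hbal u'
        unfold balance at hb
        rw [hin] at hb
        have h1 : 1 ≤ outdeg D u' := hout
        push_cast at hb
        omega
      set D' : Multiset (V × V) := D.erase (u', v) with hD'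
      have hDeq : D = (u', v) ::ₘ D' := (Multiset.cons_erase heD).symm
      have hacy' : DAcyclic D' := dacyclic_of_le (Multiset.erase_le _ _) hac
      have hbal' : ∀ w, balance D' (applyMove p u' v) w = balance D p w := by
        intro w
        conv_rhs => rw [hDeq]
        exact (balance_cons D' p (u', v) w h2).symm
      have hcard' : Multiset.card D' ≤ n := by
        have h := Multiset.card_erase_of_mem heD
        rw [← hD', Nat.pred_eq_sub_one] at h
        have : 0 < Multiset.card D := Multiset.card_pos.2 hD
        omega
      obtain ⟨σ', hcoe, hval, happ⟩ :=
        ih D' (applyMove p u' v) hcard' hacy'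
          (fun f hf => hadj f (Multiset.mem_of_le (Multiset.erase_le _ _) hf))
          (fun w => (hbal' w) ▸ hbal w)
      refine ⟨(u', v) :: σ', ?_, ⟨hadj (u', v) heD, h2, hval⟩, ?_⟩
      · rw [← Multiset.cons_coe, hcoe, ← hDeq]
      · intro w
        rw [show applySeq p ((u', v) :: σ') w = applySeq (applyMove p u' v) σ' w from rfl]
        rw [happ w, hbal' w]


/-- `r` is reachable under `p` iff the distribution `q` obtained by adding one pebble to
every vertex except `r` covers the unit distribution. -/
theorem reachable_iff_coverable (G : SimpleGraph V) (p : V → ℕ) (r : V) :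
    (∃ σ : List (V × V), IsValidSeq G p σ ∧ 1 ≤ applySeq p σ r) ↔
    (∃ τ : List (V × V),
      IsValidSeq G (fun x => if x = r then p r else p x + 1) τ ∧
      ∀ x : V, 1 ≤ applySeq (fun x => if x = r then p r else p x + 1) τ x) := by
  have hq : (fun x => if x = r then p r else p x + 1)
      = fun x => p x + (if x = r then 0 else 1) := by
    funext x
    split_ifs with h
    · subst h; ring
    · ring
  constructor
  · rintro ⟨σ, hval, hr⟩
    obtain ⟨hv, ha⟩ := valid_add G (fun x => if x = r then 0 else 1) σ p hval
    rw [hq]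
    refine ⟨σ, hv, fun x => ?_⟩
    rw [ha x]
    split_ifs with h
    · subst h; omega
    · omega
  · rw [hq]
    rintro ⟨τ, hval, hcov⟩
    set q : V → ℕ := fun x => p x + (if x = r then 0 else 1) with hqdef
    have hbalq : ∀ w, (1 : ℤ) ≤ balance ↑τ q w := by
      intro w
      rw [← applySeq_eq_balance G τ q hval w]
      exact_mod_cast hcov w
    have hqp : ∀ w, balance (↑τ) q w = balance (↑τ) p w + (if w = r then 0 else 1) := by
      intro w
      unfold balance
      rw [hqdef]
      push_cast
      ring
    obtain ⟨D', hsub, hacy, hgain⟩ := exists_acyclic_sub (Multiset.card (↑τ : Multiset (V × V))) (↑τ : Multiset (V × V)) le_rfl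
    have hmono : ∀ w, balance (↑τ) p w ≤ balance D' p w := by
      intro w
      unfold balance
      have := hgain w
      omega
    have hbalp : ∀ w, 0 ≤ balance D' p w := by
      intro w
      have h1 := hbalq w
      rw [hqp w] at h1
      have h2 := hmono w
      split_ifs at h1 <;> omega
    have hbalr : 1 ≤ balance D' p r := by
      have h1 := hbalq r
      rw [hqp r] at h1
      simp at h1
      have h2 := hmono r
      omega
    have hadjD : ∀ e ∈ D', G.Adj e.1 e.2 := by
      intro e he
      refine edges_adj G τ q hval e ?_
      have : e ∈ (↑τ : Multiset (V × V)) := Multiset.mem_of_le hsub he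
      exact Multiset.mem_coe.1 this
    obtain ⟨σ, -, hv, happ⟩ :=
      orderable_of_acyclic G (Multiset.card D') D' p le_rfl hacy hadjD hbalp
    refine ⟨σ, hv, ?_⟩
    have h3 := happ r
    omega
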